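/- On a quasi-para-Sasakian manifold, the Ricci curvature in the direction of the Reeb field satisfies S(ξ, ξ) = −tr(A²), where AX = ∇_X ξ and S denotes the Ricci tensor. -/
import Mathlib


/-- An abstract context for a (2n+1)-dimensional almost paracontact metric manifold:
`C` plays the role of the ring of smooth functions, `V` the module of vector fields,
with Lie bracket `bracket`, the derivation action `act` of vector fields on functions,
a (pseudo-Riemannian, nondegenerate) metric `g`, its Levi-Civita connection `nabla`
(characterized by being torsion-free and metric), and an almost paracontact metric
structure `(phi, xi, eta)`:  `φ² = Id − η ⊗ ξ`, `η(ξ) = 1`,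
`g(φX, φY) = −g(X,Y) + η(X)η(Y)`. -/
structure QPSCtx (C V : Type*) [CommRing C] [Algebra ℝ C]
    [AddCommGroup V] [Module C V] where
  bracket : V → V → V
  act : V → C → C
  act_add : ∀ X f₁ f₂, act X (f₁ + f₂) = act X f₁ + act X f₂
  act_mul : ∀ X f₁ f₂, act X (f₁ * f₂) = f₁ * act X f₂ + f₂ * act X f₁
  g : V → V → C
  g_symm : ∀ X Y, g X Y = g Y X
  g_addl : ∀ X Y Z, g (X + Y) Z = g X Z + g Y Z
  g_smull : ∀ (f : C) X Y, g (f • X) Y = f * g X Y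
  g_nondeg : ∀ X, (∀ Y, g X Y = 0) → X = 0
  nabla : V → V → V
  nabla_addl : ∀ X Y Z, nabla (X + Y) Z = nabla X Z + nabla Y Z
  nabla_addr : ∀ X Y Z, nabla X (Y + Z) = nabla X Y + nabla X Z
  nabla_smull : ∀ (f : C) X Y, nabla (f • X) Y = f • nabla X Y
  nabla_leibniz : ∀ X (f : C) Y, nabla X (f • Y) = act X f • Y + f • nabla X Y
  torsion_free : ∀ X Y, nabla X Y - nabla Y X = bracket X Y
  metric_compat : ∀ X Y Z, act X (g Y Z) = g (nabla X Y) Z + g Y (nabla X Z)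
  phi : V → V
  phi_add : ∀ X Y, phi (X + Y) = phi X + phi Y
  phi_smul : ∀ (f : C) X, phi (f • X) = f • phi X
  xi : V
  eta : V → C
  eta_add : ∀ X Y, eta (X + Y) = eta X + eta Y
  eta_smul : ∀ (f : C) X, eta (f • X) = f * eta X
  phi_sq : ∀ X, phi (phi X) = X - eta X • xi
  eta_xi : eta xi = 1
  compat : ∀ X Y, g (phi X) (phi Y) = - g X Y + eta X * eta Y

namespace QPSCtx
variable {C V : Type*} [CommRing C] [Algebra ℝ C] [AddCommGroup V] [Module C V]
variable (P : QPSCtx C V)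

/-- The `(1,1)`-tensor `A X = ∇_X ξ`. -/
def A (X : V) : V := P.nabla X P.xi

/-- The fundamental 2-form `Φ(X,Y) = g(X, φY)`. -/
def Phi (X Y : V) : C := P.g X (P.phi Y)

/-- `2 dη(X,Y) = X(η Y) − Y(η X) − η [X,Y]`. -/
def twoDeta (X Y : V) : C :=
  P.act X (P.eta Y) - P.act Y (P.eta X) - P.eta (P.bracket X Y)

/-- The Nijenhuis torsion `[φ,φ](X,Y) = φ²[X,Y] + [φX,φY] − φ[φX,Y] − φ[X,φY]`. -/
def nij (X Y : V) : V :=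
  P.phi (P.phi (P.bracket X Y)) + P.bracket (P.phi X) (P.phi Y)
    - P.phi (P.bracket (P.phi X) Y) - P.phi (P.bracket X (P.phi Y))

/-- Normality: `N⁽¹⁾(X,Y) = [φ,φ](X,Y) − 2dη(X,Y) ξ = 0`. -/
def Normal : Prop := ∀ X Y, P.nij X Y - P.twoDeta X Y • P.xi = 0

/-- Closedness of the fundamental 2-form: `3 dΦ(X,Y,Z) = 0`. -/
def PhiClosed : Prop := ∀ X Y Z,
  P.act X (P.Phi Y Z) - P.act Y (P.Phi X Z) + P.act Z (P.Phi X Y)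
    - P.Phi (P.bracket X Y) Z + P.Phi (P.bracket X Z) Y - P.Phi (P.bracket Y Z) X = 0

/-- Quasi-para-Sasakian: normal almost paracontact metric with closed fundamental form. -/
def QPS : Prop := P.Normal ∧ P.PhiClosed

/-- Para-Sasakian: normal with `Φ = dη`. -/
def ParaSasakian : Prop := P.Normal ∧ ∀ X Y, 2 * P.Phi X Y = P.twoDeta X Y

/-- The curvature tensor `R(X,Y)Z = ∇_X ∇_Y Z − ∇_Y ∇_X Z − ∇_{[X,Y]} Z`. -/
def R (X Y Z : V) : V :=
  P.nabla X (P.nabla Y Z) - P.nabla Y (P.nabla X Z) - P.nabla (P.bracket X Y) Z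

/-- The deformed 1-form `η̃ = α η`. -/
def etaT (α : ℝ) (X : V) : C := algebraMap ℝ C α * P.eta X

/-- The deformed Reeb field `ξ̃ = ξ / α`. -/
noncomputable def xiT (α : ℝ) : V := (algebraMap ℝ C α⁻¹) • P.xi

/-- The deformed metric `g̃ = β g + (α² − β) η ⊗ η`. -/
def gT (α β : ℝ) (X Y : V) : C :=
  algebraMap ℝ C β * P.g X Y + algebraMap ℝ C (α ^ 2 - β) * (P.eta X * P.eta Y)

/-- The deformed fundamental form `Φ̃(X,Y) = g̃(X, φ Y)`. -/
def PhiT (α β : ℝ) (X Y : V) : C := P.gT α β X (P.phi Y)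


section Aux

lemma half_cancel' {x : C} (h : x + x = 0) : x = 0 := by
  have h2 : (2:C) * x = 0 := by rw [two_mul]; exact h
  have e : ((algebraMap ℝ C) (1/2)) * (2:C) = 1 := by
    rw [← map_ofNat (algebraMap ℝ C) 2, ← map_mul]; norm_num
  calc x = (((algebraMap ℝ C) (1/2)) * (2:C)) * x := by rw [e, one_mul]
       _ = ((algebraMap ℝ C) (1/2)) * ((2:C) * x) := by rw [mul_assoc]
       _ = 0 := by rw [h2, mul_zero]

/-- `d X = η(φX)`. -/
def dd (X : V) : C := P.eta (P.phi X)

/-- `c = η(φξ)`. -/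
def cc : C := P.eta (P.phi P.xi)

/-- `h(X,Y) = (L_ξ g)(X,Y)`. -/
def hh (X Y : V) : C := P.g (P.A X) Y + P.g X (P.A Y)

/-- `L Y = (L_ξ φ)(Y)`. -/
def LL (Y : V) : V := P.bracket P.xi (P.phi Y) - P.phi (P.bracket P.xi Y)

-- basic utilities
lemma g_addr (X Y Z : V) : P.g X (Y + Z) = P.g X Y + P.g X Z := by
  rw [P.g_symm X (Y+Z), P.g_addl, P.g_symm Y X, P.g_symm Z X]

lemma g_smulr (f : C) (X Y : V) : P.g X (f • Y) = f * P.g X Y := by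
  rw [P.g_symm X (f • Y), P.g_smull, P.g_symm Y X]

lemma g_zerol (Y : V) : P.g 0 Y = 0 := by
  have h := P.g_addl 0 0 Y
  rw [add_zero] at h
  exact (add_eq_right.mp h.symm)

lemma g_zeror (X : V) : P.g X 0 = 0 := by rw [P.g_symm, P.g_zerol]

lemma g_negl (X Y : V) : P.g (-X) Y = - P.g X Y := by
  rw [← neg_one_smul C X, P.g_smull, neg_one_mul]

lemma g_subl (X Y Z : V) : P.g (X - Y) Z = P.g X Z - P.g Y Z := by
  rw [sub_eq_add_neg, P.g_addl, P.g_negl, sub_eq_add_neg]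

lemma g_negr (X Y : V) : P.g X (-Y) = - P.g X Y := by
  rw [P.g_symm, P.g_negl, P.g_symm Y X]

lemma g_subr (X Y Z : V) : P.g X (Y - Z) = P.g X Y - P.g X Z := by
  rw [sub_eq_add_neg, P.g_addr, P.g_negr, sub_eq_add_neg]

lemma phi_zero : P.phi 0 = 0 := by
  have h := P.phi_add 0 0
  rw [add_zero] at h
  exact (add_eq_right.mp h.symm)

lemma phi_neg (X : V) : P.phi (-X) = - P.phi X := by
  rw [← neg_one_smul C X, P.phi_smul, neg_one_smul]

lemma phi_sub (X Y : V) : P.phi (X - Y) = P.phi X - P.phi Y := by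
  rw [sub_eq_add_neg, P.phi_add, P.phi_neg, sub_eq_add_neg]

lemma eta_zero : P.eta 0 = 0 := by
  have h := P.eta_add 0 0
  rw [add_zero] at h
  exact (add_eq_right.mp h.symm)

lemma eta_neg (X : V) : P.eta (-X) = - P.eta X := by
  rw [← neg_one_smul C X, P.eta_smul, neg_one_mul]

lemma eta_sub (X Y : V) : P.eta (X - Y) = P.eta X - P.eta Y := by
  rw [sub_eq_add_neg, P.eta_add, P.eta_neg, sub_eq_add_neg]

lemma dd_add (X Y : V) : P.dd (X + Y) = P.dd X + P.dd Y := by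
  unfold dd; rw [P.phi_add, P.eta_add]

lemma dd_smul (f : C) (X : V) : P.dd (f • X) = f * P.dd X := by
  unfold dd; rw [P.phi_smul, P.eta_smul]

lemma dd_sub (X Y : V) : P.dd (X - Y) = P.dd X - P.dd Y := by
  unfold dd; rw [P.phi_sub, P.eta_sub]

lemma nabla_zeror (X : V) : P.nabla X 0 = 0 := by
  have h := P.nabla_addr X 0 0
  rw [add_zero] at h
  exact (add_eq_right.mp h.symm)

lemma A_add (X Y : V) : P.A (X + Y) = P.A X + P.A Y := P.nabla_addl X Y P.xi

lemma A_smul (f : C) (X : V) : P.A (f • X) = f • P.A X := P.nabla_smull f X P.xi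

lemma A_neg (X : V) : P.A (-X) = - P.A X := by
  rw [← neg_one_smul C X, P.A_smul, neg_one_smul]

lemma A_sub (X Y : V) : P.A (X - Y) = P.A X - P.A Y := by
  rw [sub_eq_add_neg, P.A_add, P.A_neg, sub_eq_add_neg]

lemma act_zero (X : V) : P.act X 0 = 0 := by
  have h := P.act_add X 0 0
  rw [add_zero] at h
  exact (add_eq_right.mp h.symm)

lemma act_one (X : V) : P.act X 1 = 0 := by
  have h := P.act_mul X 1 1
  rw [mul_one] at h
  simp only [one_mul] at h
  exact (add_eq_right.mp h.symm)

lemma act_neg (X : V) (f : C) : P.act X (-f) = - P.act X f := by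
  have h := P.act_add X f (-f)
  rw [add_neg_cancel, P.act_zero] at h
  exact (eq_neg_of_add_eq_zero_right h.symm)

lemma act_sub (X : V) (f₁ f₂ : C) : P.act X (f₁ - f₂) = P.act X f₁ - P.act X f₂ := by
  rw [sub_eq_add_neg, P.act_add, P.act_neg, sub_eq_add_neg]

lemma bracket_eq (X Y : V) : P.bracket X Y = P.nabla X Y - P.nabla Y X :=
  (P.torsion_free X Y).symm

lemma bracket_self (X : V) : P.bracket X X = 0 := by
  rw [← P.torsion_free, sub_self]

end Aux

section Pointwise

lemma dd_def (X : V) : P.eta (P.phi X) = P.dd X := rfl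

lemma phi_sq_xi : P.phi (P.phi P.xi) = 0 := by
  rw [P.phi_sq P.xi, P.eta_xi, one_smul, sub_self]

lemma phixi : P.phi P.xi = P.cc • P.xi := by
  have h := P.phi_sq (P.phi P.xi)
  have h' := congrArg P.phi P.phi_sq_xi
  rw [P.phi_zero] at h'
  rw [h'] at h
  exact (sub_eq_zero.mp h.symm)

lemma cc_sq : P.cc * P.cc = 0 := by
  have h : ((P.cc * P.cc) • P.xi : V) = 0 := by
    rw [← smul_smul, ← P.phixi, ← P.phi_smul, ← P.phixi, P.phi_sq_xi]
  have h2 := congrArg P.eta h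
  rw [P.eta_smul, P.eta_xi, mul_one, P.eta_zero] at h2
  exact h2

lemma g_xixi : P.g P.xi P.xi = 1 := by
  have h := P.compat P.xi P.xi
  rw [P.phixi, P.g_smull, P.g_smulr, ← mul_assoc, P.cc_sq, zero_mul, P.eta_xi, mul_one] at h
  linear_combination h

lemma ea (X : V) : P.cc * P.g (P.phi X) P.xi = - P.g X P.xi + P.eta X := by
  have h := P.compat X P.xi
  rw [P.phixi, P.g_smulr, P.eta_xi, mul_one] at h
  exact h

lemma th_phi (X : V) : P.g (P.phi X) P.xi = P.dd X := by
  have h := P.compat (P.phi X) P.xi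
  rw [P.phixi, P.g_smulr, P.eta_xi, mul_one, P.dd_def] at h
  have h2 : P.g (P.phi (P.phi X)) P.xi = P.g X P.xi - P.eta X * P.g P.xi P.xi := by
    rw [P.phi_sq, P.g_subl, P.g_smull]
  rw [h2, P.g_xixi, mul_one] at h
  have h3 := P.ea X
  linear_combination h - P.cc * h3 + P.g (P.phi X) P.xi * P.cc_sq

lemma th_eq (X : V) : P.g X P.xi = P.eta X - P.cc * P.dd X := by
  have h3 := P.ea X
  rw [P.th_phi] at h3
  linear_combination h3

lemma dagger (X Y : V) : P.g X (P.phi Y) + P.g (P.phi X) Y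
    = P.eta X * P.dd Y + P.dd X * P.eta Y := by
  have h := P.compat X (P.phi Y)
  have h2 : P.g (P.phi X) (P.phi (P.phi Y)) = P.g (P.phi X) Y - P.eta Y * P.g (P.phi X) P.xi := by
    rw [P.phi_sq, P.g_subr, P.g_smulr]
  rw [h2, P.th_phi, P.dd_def] at h
  linear_combination h

lemma dd_mul (X Y : V) : P.dd X * P.dd Y = P.cc * (P.eta X * P.dd Y + P.eta Y * P.dd X) := by
  have h := P.compat (P.phi X) (P.phi Y)
  have hxy := P.compat X Y
  have h2 : P.g (P.phi (P.phi X)) (P.phi (P.phi Y))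
      = P.g X Y - P.eta Y * P.g X P.xi - P.eta X * P.g P.xi Y
        + P.eta X * P.eta Y * P.g P.xi P.xi := by
    rw [P.phi_sq X, P.phi_sq Y, P.g_subl, P.g_subr, P.g_subr, P.g_smull, P.g_smull,
        P.g_smulr, P.g_smulr]
    ring
  rw [h2, P.g_xixi, hxy, P.dd_def, P.dd_def] at h
  have e1 := P.th_eq X
  have e2 : P.g P.xi Y = P.eta Y - P.cc * P.dd Y := by
    rw [P.g_symm P.xi Y]; exact P.th_eq Y
  rw [e1, e2] at h
  linear_combination -h

lemma cdd (X Y : V) : P.cc * (P.dd X * P.dd Y) = 0 := by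
  calc P.cc * (P.dd X * P.dd Y)
      = P.cc * (P.cc * (P.eta X * P.dd Y + P.eta Y * P.dd X)) := by rw [P.dd_mul]
    _ = (P.cc * P.cc) * (P.eta X * P.dd Y + P.eta Y * P.dd X) := by ring
    _ = 0 := by rw [P.cc_sq, zero_mul]

lemma dd_phi (X : V) : P.dd (P.phi X) = 0 := by
  rw [← P.dd_def, P.phi_sq, P.eta_sub, P.eta_smul, P.eta_xi, mul_one, sub_self]

lemma th_A (X : V) : P.g (P.A X) P.xi = 0 := by
  have h := P.metric_compat X P.xi P.xi
  rw [P.g_xixi, P.act_one] at h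
  have h2 : P.g P.xi (P.nabla X P.xi) = P.g (P.A X) P.xi := by
    rw [P.g_symm P.xi (P.nabla X P.xi)]; rfl
  rw [h2] at h
  exact half_cancel' h.symm

lemma eta_A (X : V) : P.eta (P.A X) = P.cc * P.dd (P.A X) := by
  have h := P.th_eq (P.A X)
  rw [P.th_A] at h
  linear_combination -h

lemma dd_xi : P.dd P.xi = P.cc := rfl

end Pointwise

section ClosedScalars

lemma Phi_def (X Y : V) : P.Phi X Y = P.g X (P.phi Y) := rfl

lemma bracket_smulr (X : V) (f : C) (Y : V) :
    P.bracket X (f • Y) = f • P.bracket X Y + P.act X f • Y := by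
  rw [P.bracket_eq, P.bracket_eq, P.nabla_leibniz, P.nabla_smull, smul_sub]
  abel

lemma Pone (hC : P.PhiClosed) (X Z : V) : P.act Z (P.g X (P.phi X)) = 0 := by
  have h := hC X X Z
  rw [P.bracket_self] at h
  simp only [P.Phi_def] at h
  rw [P.g_zerol] at h
  linear_combination h

lemma Ppol (hC : P.PhiClosed) (X Y Z : V) :
    P.act Z (P.g X (P.phi Y) + P.g Y (P.phi X)) = 0 := by
  have hXY := P.Pone hC (X + Y) Z
  have e : P.g (X + Y) (P.phi (X + Y))
      = P.g X (P.phi X) + P.g Y (P.phi Y) + (P.g X (P.phi Y) + P.g Y (P.phi X)) := by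
    rw [P.phi_add, P.g_addl, P.g_addr, P.g_addr]
    ring
  rw [e, P.act_add, P.act_add, P.Pone hC X Z, P.Pone hC Y Z] at hXY
  linear_combination hXY

lemma g_xi_phixi : P.g P.xi (P.phi P.xi) = P.cc := by
  rw [P.phixi, P.g_smulr, P.g_xixi, mul_one]

lemma act_cc (hC : P.PhiClosed) (Z : V) : P.act Z P.cc = 0 := by
  have h := P.Ppol hC P.xi P.xi Z
  rw [P.g_xi_phixi, P.act_add] at h
  exact half_cancel' h

lemma act_ccmul (hC : P.PhiClosed) (Z : V) (f : C) :
    P.act Z (P.cc * f) = P.cc * P.act Z f := by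
  rw [P.act_mul, P.act_cc hC, mul_zero, add_zero]

lemma g_xi_phi (Y : V) : P.g P.xi (P.phi Y) = P.dd Y := by
  rw [P.g_symm P.xi (P.phi Y)]; exact P.th_phi Y

lemma g_phixi_r (Y : V) : P.g Y (P.phi P.xi) = P.cc * P.g Y P.xi := by
  rw [P.phixi, P.g_smulr]

lemma P2 (hC : P.PhiClosed) (Z Y : V) :
    P.act Z (P.dd Y) = -(P.cc * P.act Z (P.g Y P.xi)) := by
  have h := P.Ppol hC P.xi Y Z
  rw [P.g_xi_phi, P.g_phixi_r, P.act_add, P.act_ccmul hC] at h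
  linear_combination h

end ClosedScalars

section Normality

lemma bracket_ccxi (hC : P.PhiClosed) (W : V) :
    P.bracket (P.cc • P.xi) W = P.cc • P.bracket P.xi W := by
  rw [P.bracket_eq, P.bracket_eq, P.nabla_smull, P.nabla_leibniz, P.act_cc hC,
      zero_smul, zero_add, smul_sub]

lemma nij_xi (hC : P.PhiClosed) (Y : V) :
    P.nij P.xi Y = P.cc • P.LL Y - P.phi (P.LL Y) := by
  show P.phi (P.phi (P.bracket P.xi Y)) + P.bracket (P.phi P.xi) (P.phi Y)
    - P.phi (P.bracket (P.phi P.xi) Y) - P.phi (P.bracket P.xi (P.phi Y))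
    = P.cc • P.LL Y - P.phi (P.LL Y)
  rw [P.phixi, P.bracket_ccxi hC, P.bracket_ccxi hC, P.phi_smul]
  show _ = P.cc • (P.bracket P.xi (P.phi Y) - P.phi (P.bracket P.xi Y))
    - P.phi (P.bracket P.xi (P.phi Y) - P.phi (P.bracket P.xi Y))
  rw [P.phi_sub, smul_sub]
  abel

lemma nuzero (hN : P.Normal) (hC : P.PhiClosed) (Y : V) :
    P.act P.xi (P.eta Y) = P.eta (P.bracket P.xi Y) := by
  set ν := P.act P.xi (P.eta Y) - P.eta (P.bracket P.xi Y) with hν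
  have h := hN P.xi Y
  have htd : P.twoDeta P.xi Y = ν := by
    show P.act P.xi (P.eta Y) - P.act Y (P.eta P.xi) - P.eta (P.bracket P.xi Y) = ν
    rw [P.eta_xi, P.act_one, hν]; ring
  rw [P.nij_xi hC, htd] at h
  have hb : P.phi (P.LL Y) = P.cc • P.LL Y - ν • P.xi := by
    linear_combination (norm := module) -h
  have hphi : P.phi (P.phi (P.LL Y)) = -(2*(P.cc * ν)) • P.xi := by
    rw [hb, P.phi_sub, P.phi_smul, P.phi_smul, hb, P.phixi]
    linear_combination (norm := module) P.cc_sq • P.LL Y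
  have hNN3 : P.LL Y = P.eta (P.LL Y) • P.xi - (2*(P.cc * ν)) • P.xi := by
    have h3 := P.phi_sq (P.LL Y)
    rw [hphi] at h3
    linear_combination (norm := module) -h3
  have w1 : P.eta (P.phi (P.LL Y)) = P.cc * P.eta (P.LL Y) - ν := by
    rw [hb, P.eta_sub, P.eta_smul, P.eta_smul, P.eta_xi, mul_one]
  have w2 : P.eta (P.phi (P.LL Y)) = P.cc * P.eta (P.LL Y) := by
    have h5 := congrArg P.phi hNN3
    rw [P.phi_sub, P.phi_smul, P.phi_smul, P.phixi, smul_smul, smul_smul] at h5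
    have h6 := congrArg P.eta h5
    rw [P.eta_sub, P.eta_smul, P.eta_smul, P.eta_xi, mul_one, mul_one] at h6
    rw [h6]
    linear_combination (-2*ν)*P.cc_sq
  have hv : ν = 0 := by linear_combination w1 - w2
  rw [hν] at hv
  exact sub_eq_zero.mp hv

lemma LLeq (hN : P.Normal) (hC : P.PhiClosed) (Y : V) :
    P.LL Y = P.eta (P.LL Y) • P.xi := by
  have h := hN P.xi Y
  have htd : P.twoDeta P.xi Y = 0 := by
    show P.act P.xi (P.eta Y) - P.act Y (P.eta P.xi) - P.eta (P.bracket P.xi Y) = 0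
    rw [P.eta_xi, P.act_one, P.nuzero hN hC]; ring
  rw [P.nij_xi hC, htd, zero_smul, sub_zero] at h
  have h2 : P.phi (P.LL Y) = P.cc • P.LL Y := by
    linear_combination (norm := module) -h
  have h3 := P.phi_sq (P.LL Y)
  rw [h2, P.phi_smul, h2, smul_smul] at h3
  linear_combination (norm := module) -h3 + P.cc_sq • P.LL Y

end Normality

section PSix

lemma LL_def (Y : V) : P.LL Y = P.bracket P.xi (P.phi Y) - P.phi (P.bracket P.xi Y) := rfl

lemma A_def (X : V) : P.A X = P.nabla X P.xi := rfl

lemma LL_smul (f : C) (Y : V) : P.LL (f • Y) = f • P.LL Y := by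
  rw [P.LL_def, P.LL_def, P.phi_smul, P.bracket_smulr, P.bracket_smulr, P.phi_add,
      P.phi_smul, P.phi_smul, smul_sub]
  abel

lemma lam_base (hN : P.Normal) (hC : P.PhiClosed) (Y : V) :
    P.eta (P.LL Y) = -(P.cc * P.act P.xi (P.g Y P.xi)) - P.dd (P.bracket P.xi Y) := by
  rw [P.LL_def, P.eta_sub, P.dd_def, ← P.nuzero hN hC (P.phi Y), P.dd_def Y,
      P.P2 hC P.xi Y]

lemma P6star (hN : P.Normal) (hC : P.PhiClosed) (f : C) (Y : V) :
    P.act P.xi f * (P.cc * P.g Y P.xi + P.dd Y) = 0 := by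
  have h1 : P.eta (P.LL (f • Y)) = f * P.eta (P.LL Y) := by
    rw [P.LL_smul, P.eta_smul]
  have h2 := P.lam_base hN hC (f • Y)
  rw [P.g_smull, P.act_mul, P.bracket_smulr, P.dd_add, P.dd_smul, P.dd_smul] at h2
  have h3 := P.lam_base hN hC Y
  rw [h1, h3] at h2
  linear_combination h2

lemma act_cc_xi (hN : P.Normal) (hC : P.PhiClosed) (f : C) :
    P.cc * P.act P.xi f = 0 := by
  have h := P.P6star hN hC f P.xi
  rw [P.g_xixi, P.dd_xi, mul_one] at h
  have h2 : P.cc * P.act P.xi f + P.cc * P.act P.xi f = 0 := by linear_combination h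
  exact half_cancel' h2

lemma P6b (hN : P.Normal) (hC : P.PhiClosed) (f : C) (X : V) :
    P.act P.xi f * P.dd X = 0 := by
  have h := P.P6star hN hC f X
  have h2 := P.act_cc_xi hN hC f
  linear_combination h - P.g X P.xi * h2

lemma actxi_dd (hN : P.Normal) (hC : P.PhiClosed) (Y : V) :
    P.act P.xi (P.dd Y) = 0 := by
  rw [P.P2 hC P.xi Y, P.act_cc_xi hN hC, neg_zero]

lemma actxi_eta (hC : P.PhiClosed) (Y : V) :
    P.act P.xi (P.eta Y) = P.act P.xi (P.g Y P.xi) + P.cc * P.act P.xi (P.dd Y) := by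
  have e0 : P.eta Y = P.g Y P.xi + P.cc * P.dd Y := by linear_combination -P.th_eq Y
  rw [e0, P.act_add, P.act_ccmul hC]

lemma dd_actxi_eta (hN : P.Normal) (hC : P.PhiClosed) (X Y : V) :
    P.dd X * P.act P.xi (P.eta Y) = 0 := by
  rw [P.actxi_eta hC, P.actxi_dd hN hC, mul_zero, add_zero]
  have h := P.P6b hN hC (P.g Y P.xi) X
  linear_combination h

lemma lam_eq (hN : P.Normal) (hC : P.PhiClosed) (Y : V) :
    P.eta (P.LL Y) = - P.dd (P.bracket P.xi Y) := by
  rw [P.lam_base hN hC Y, P.act_cc_xi hN hC (P.g Y P.xi), neg_zero, zero_sub]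

end PSix

section StarStar

lemma hh_def (X Y : V) : P.hh X Y = P.g (P.A X) Y + P.g X (P.A Y) := rfl

lemma hh_symm (X Y : V) : P.hh X Y = P.hh Y X := by
  rw [P.hh_def, P.hh_def, P.g_symm (P.A X) Y, P.g_symm X (P.A Y)]
  ring

lemma nabla_xi_phi (Y : V) :
    P.nabla P.xi (P.phi Y)
      = P.LL Y + P.A (P.phi Y) + P.phi (P.nabla P.xi Y) - P.phi (P.A Y) := by
  rw [P.LL_def, P.bracket_eq, P.bracket_eq, P.phi_sub, P.A_def, P.A_def]
  abel

lemma starstar (hN : P.Normal) (hC : P.PhiClosed) (X Y : V) :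
    P.hh (P.phi Y) X = -(P.cc * P.g (P.A X) Y) + P.cc * P.g (P.A Y) X := by
  have h := hC P.xi X Y
  simp only [P.Phi_def] at h
  rw [P.g_xi_phi Y, P.g_xi_phi X] at h
  rw [P.P2 hC X Y, P.P2 hC Y X] at h
  have e6 : P.act X (P.g Y P.xi) = P.g (P.nabla X Y) P.xi + P.g Y (P.A X) := by
    rw [P.metric_compat X Y P.xi, P.A_def]
  have e7 : P.act Y (P.g X P.xi) = P.g (P.nabla Y X) P.xi + P.g X (P.A Y) := by
    rw [P.metric_compat Y X P.xi, P.A_def]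
  rw [e6, e7] at h
  rw [P.g_phixi_r (P.bracket X Y)] at h
  have e10 : P.g (P.bracket X Y) P.xi = P.g (P.nabla X Y) P.xi - P.g (P.nabla Y X) P.xi := by
    rw [P.bracket_eq, P.g_subl]
  rw [e10] at h
  have e8 : P.g (P.bracket P.xi X) (P.phi Y)
      = P.g (P.nabla P.xi X) (P.phi Y) - P.g (P.A X) (P.phi Y) := by
    rw [P.bracket_eq, P.g_subl, P.A_def]
  have e9 : P.g (P.bracket P.xi Y) (P.phi X)
      = P.g (P.phi X) (P.nabla P.xi Y) - P.g (P.phi X) (P.A Y) := by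
    rw [P.bracket_eq, P.g_subl, P.A_def, P.g_symm (P.nabla P.xi Y) (P.phi X),
        P.g_symm (P.nabla Y P.xi) (P.phi X)]
  rw [e8, e9] at h
  rw [P.metric_compat P.xi X (P.phi Y)] at h
  rw [P.nabla_xi_phi Y] at h
  have e12 : P.g X (P.LL Y + P.A (P.phi Y) + P.phi (P.nabla P.xi Y) - P.phi (P.A Y))
      = P.g X (P.LL Y) + P.g X (P.A (P.phi Y)) + P.g X (P.phi (P.nabla P.xi Y))
        - P.g X (P.phi (P.A Y)) := by
    rw [P.g_subr, P.g_addr, P.g_addr]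
  rw [e12] at h
  have e13 : P.g X (P.LL Y) = -(P.dd (P.bracket P.xi Y)) * P.g X P.xi := by
    rw [P.LLeq hN hC Y, P.g_smulr, P.lam_eq hN hC Y]
  rw [e13, P.th_eq X] at h
  have e16 : P.g X (P.phi (P.nabla P.xi Y))
      = P.eta X * P.dd (P.nabla P.xi Y) + P.dd X * P.eta (P.nabla P.xi Y)
        - P.g (P.phi X) (P.nabla P.xi Y) := by
    linear_combination P.dagger X (P.nabla P.xi Y)
  have e17 : P.g X (P.phi (P.A Y))
      = P.eta X * P.dd (P.A Y) + P.dd X * P.eta (P.A Y) - P.g (P.phi X) (P.A Y) := by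
    linear_combination P.dagger X (P.A Y)
  rw [e16, e17] at h
  have eb : P.nabla P.xi Y = P.bracket P.xi Y + P.A Y := by
    rw [P.bracket_eq, P.A_def]; abel
  have e18 : P.eta (P.nabla P.xi Y) = P.act P.xi (P.eta Y) + P.eta (P.A Y) := by
    rw [eb, P.eta_add, P.nuzero hN hC]
  have e21 : P.dd (P.nabla P.xi Y) = P.dd (P.bracket P.xi Y) + P.dd (P.A Y) := by
    rw [eb, P.dd_add]
  rw [e18, e21, P.eta_A Y] at h
  -- reorient g terms
  rw [P.g_symm X (P.A (P.phi Y)), P.g_symm (P.A X) (P.phi Y),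
      P.g_symm Y (P.A X), P.g_symm X (P.A Y)] at h
  have k1 := P.dd_actxi_eta hN hC X Y
  have k3 := P.cdd X (P.bracket P.xi Y)
  rw [P.hh_def]
  linear_combination h - k1 - k3
end StarStar

section Diamond

lemma hh_addl (X Y W : V) : P.hh (X + Y) W = P.hh X W + P.hh Y W := by
  rw [P.hh_def, P.hh_def, P.hh_def, P.A_add, P.g_addl, P.g_addl]
  ring

lemma hh_smull (f : C) (X W : V) : P.hh (f • X) W = f * P.hh X W := by
  rw [P.hh_def, P.hh_def, P.A_smul, P.g_smull, P.g_smull]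
  ring

lemma hh_xi (X : V) : P.hh P.xi X = P.g (P.A P.xi) X := by
  rw [P.hh_def, P.g_symm P.xi (P.A X), P.th_A, add_zero]

lemma diamond (hN : P.Normal) (hC : P.PhiClosed) (X Y : V) :
    P.hh X Y = P.eta Y * P.g (P.A P.xi) X
      - P.cc * P.g (P.A X) (P.phi Y) + P.cc * P.g (P.A (P.phi Y)) X := by
  have hY : Y = P.phi (P.phi Y) + P.eta Y • P.xi := by
    rw [P.phi_sq]; abel
  have hsym := P.hh_symm X Y
  rw [hsym]
  nth_rewrite 1 [hY]
  rw [P.hh_addl, P.hh_smull, P.hh_xi, P.starstar hN hC X (P.phi Y)]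
  ring
end Diamond

section Final

lemma gAxi_step (hN : P.Normal) (hC : P.PhiClosed) (X : V) :
    P.g (P.A P.xi) X = -(P.cc * P.g (P.A P.xi) (P.phi X)) := by
  have h2 := P.diamond hN hC P.xi X
  rw [P.hh_xi, P.th_A P.xi, P.th_A (P.phi X)] at h2
  linear_combination h2

lemma gAxi (hN : P.Normal) (hC : P.PhiClosed) (X : V) : P.g (P.A P.xi) X = 0 := by
  have s1 := P.gAxi_step hN hC X
  have s2 := P.gAxi_step hN hC (P.phi X)
  linear_combination s1 - P.cc * s2 + P.g (P.A P.xi) (P.phi (P.phi X)) * P.cc_sq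

lemma hh_final (hN : P.Normal) (hC : P.PhiClosed) (X Y : V) :
    P.hh X Y = - (P.cc * P.g (P.A X) (P.phi Y)) + P.cc * P.g (P.A (P.phi Y)) X := by
  rw [P.diamond hN hC X Y, P.gAxi hN hC X]
  ring

lemma act_sum (X : V) {κ : Type*} (s : Finset κ) (f : κ → C) :
    P.act X (∑ i ∈ s, f i) = ∑ i ∈ s, P.act X (f i) := by
  classical
  induction s using Finset.cons_induction with
  | empty => simpa using P.act_zero X
  | cons a s ha ih => rw [Finset.sum_cons, Finset.sum_cons, P.act_add, ih]

lemma g_sumr (X : V) {κ : Type*} (s : Finset κ) (v : κ → V) :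
    P.g X (∑ i ∈ s, v i) = ∑ i ∈ s, P.g X (v i) := by
  classical
  induction s using Finset.cons_induction with
  | empty => simpa using P.g_zeror X
  | cons a s ha ih => rw [Finset.sum_cons, Finset.sum_cons, P.g_addr, ih]

lemma g_suml (X : V) {κ : Type*} (s : Finset κ) (v : κ → V) :
    P.g (∑ i ∈ s, v i) X = ∑ i ∈ s, P.g (v i) X := by
  classical
  induction s using Finset.cons_induction with
  | empty => simpa using P.g_zerol X
  | cons a s ha ih => rw [Finset.sum_cons, Finset.sum_cons, P.g_addl, ih]

lemma A_zero : P.A 0 = 0 := by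
  have h := P.A_add 0 0
  rw [add_zero] at h
  exact (add_eq_right.mp h.symm)

lemma A_sumv {κ : Type*} (s : Finset κ) (v : κ → V) :
    P.A (∑ i ∈ s, v i) = ∑ i ∈ s, P.A (v i) := by
  classical
  induction s using Finset.cons_induction with
  | empty => simpa using P.A_zero
  | cons a s ha ih => rw [Finset.sum_cons, Finset.sum_cons, P.A_add, ih]

end Final
end QPSCtx

theorem stmt10 {C V : Type*} [CommRing C] [Algebra ℝ C] [AddCommGroup V] [Module C V]
    (P : QPSCtx C V) (h : P.QPS)
    {ι : Type*} [Fintype ι] [DecidableEq ι] (e : ι → V) (ε : ι → C)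
    (hε : ∀ i, ε i = 1 ∨ ε i = -1)
    (hortho : ∀ i j, P.g (e i) (e j) = if i = j then ε i else 0)
    (hexpand : ∀ X : V, X = ∑ i, (ε i * P.g X (e i)) • e i) :
    ∑ i, ε i * P.g (P.R (e i) P.xi P.xi) (e i)
      = -∑ i, ε i * P.g (P.A (P.A (e i))) (e i) := by
  classical
  obtain ⟨hN, hC⟩ := h
  have Axi0 : P.A P.xi = 0 := by
    have hexp := hexpand (P.A P.xi)
    rw [hexp]
    apply Finset.sum_eq_zero
    intro i _
    rw [P.gAxi hN hC (e i), mul_zero, zero_smul]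
  have act_eps : ∀ i, P.act P.xi (ε i) = 0 := by
    intro i
    rcases hε i with h1 | h1
    · rw [h1, P.act_one]
    · rw [h1, show ((-1 : C)) = -(1:C) by norm_num, P.act_neg, P.act_one, neg_zero]
  have gR : ∀ i, P.g (P.R (e i) P.xi P.xi) (e i)
      = -(P.g (P.A (P.A (e i))) (e i)) - P.act P.xi (P.g (P.A (e i)) (e i))
        + (P.g (P.A (e i)) (P.nabla P.xi (e i)) + P.g (P.A (P.nabla P.xi (e i))) (e i)) := by
    intro i
    have hR : P.R (e i) P.xi P.xi
        = - P.nabla P.xi (P.A (e i)) - (P.A (P.A (e i)) - P.A (P.nabla P.xi (e i))) := by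
      show P.nabla (e i) (P.nabla P.xi P.xi) - P.nabla P.xi (P.nabla (e i) P.xi)
          - P.nabla (P.bracket (e i) P.xi) P.xi = _
      have hb : P.bracket (e i) P.xi = P.A (e i) - P.nabla P.xi (e i) := by
        rw [P.bracket_eq, P.A_def]
      rw [show P.nabla P.xi P.xi = (0:V) from Axi0, P.nabla_zeror, hb, ← P.A_def, ← P.A_def, P.A_sub]
      abel
    have hx : P.g (P.nabla P.xi (P.A (e i))) (e i)
        = P.act P.xi (P.g (P.A (e i)) (e i)) - P.g (P.A (e i)) (P.nabla P.xi (e i)) := by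
      linear_combination -P.metric_compat P.xi (P.A (e i)) (e i)
    rw [hR, P.g_subl, P.g_negl, P.g_subl, hx]
    ring
  set T := ∑ i, ε i * P.g (P.A (e i)) (e i) with hT
  have hTT : T + T = P.cc * (∑ i, ε i *
      (-(P.g (P.A (e i)) (P.phi (e i))) + P.g (P.A (P.phi (e i))) (e i))) := by
    rw [hT, ← Finset.sum_add_distrib, Finset.mul_sum]
    apply Finset.sum_congr rfl
    intro i _
    have hi := P.hh_final hN hC (e i) (e i)
    rw [P.hh_def, P.g_symm (e i) (P.A (e i))] at hi
    linear_combination (ε i) * hi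
  have hactT : P.act P.xi T = 0 := by
    apply QPSCtx.half_cancel'
    rw [← P.act_add, hTT, P.act_ccmul hC]
    exact P.act_cc_xi hN hC _
  have S1 : ∑ i, ε i * P.act P.xi (P.g (P.A (e i)) (e i)) = 0 := by
    have hc : ∀ i ∈ Finset.univ, ε i * P.act P.xi (P.g (P.A (e i)) (e i))
        = P.act P.xi (ε i * P.g (P.A (e i)) (e i)) := by
      intro i _
      rw [P.act_mul, act_eps i]
      ring
    rw [Finset.sum_congr rfl hc, ← P.act_sum, ← hT, hactT]
  have antis : ∀ i j, P.g (P.nabla P.xi (e i)) (e j) + P.g (P.nabla P.xi (e j)) (e i) = 0 := by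
    intro i j
    have hm := P.metric_compat P.xi (e i) (e j)
    rw [hortho i j] at hm
    have hz : P.act P.xi (if i = j then ε i else 0) = 0 := by
      by_cases hij : i = j
      · rw [if_pos hij]; exact act_eps i
      · rw [if_neg hij]; exact P.act_zero P.xi
    rw [hz] at hm
    rw [P.g_symm (P.nabla P.xi (e j)) (e i)]
    linear_combination -hm
  have exp1 : ∀ i, P.g (P.A (e i)) (P.nabla P.xi (e i))
      = ∑ j, (ε j * P.g (P.nabla P.xi (e i)) (e j)) * P.g (P.A (e i)) (e j) := by
    intro i
    conv_lhs => rw [hexpand (P.nabla P.xi (e i))]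
    rw [P.g_sumr]
    apply Finset.sum_congr rfl
    intro j _
    rw [P.g_smulr]
  have exp2 : ∀ i, P.g (P.A (P.nabla P.xi (e i))) (e i)
      = ∑ j, (ε j * P.g (P.nabla P.xi (e i)) (e j)) * P.g (P.A (e j)) (e i) := by
    intro i
    conv_lhs => rw [hexpand (P.nabla P.xi (e i))]
    rw [P.A_sumv, P.g_suml]
    apply Finset.sum_congr rfl
    intro j _
    rw [P.A_smul, P.g_smull]
  have S2' : ∑ i, ε i * (P.g (P.A (e i)) (P.nabla P.xi (e i))
        + P.g (P.A (P.nabla P.xi (e i))) (e i))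
      = ∑ i, ∑ j, ε i * ((ε j * P.g (P.nabla P.xi (e i)) (e j))
        * (P.g (P.A (e i)) (e j) + P.g (P.A (e j)) (e i))) := by
    apply Finset.sum_congr rfl
    intro i _
    rw [exp1 i, exp2 i, ← Finset.sum_add_distrib, Finset.mul_sum]
    apply Finset.sum_congr rfl
    intro j _
    ring
  have S2 : ∑ i, ∑ j, ε i * ((ε j * P.g (P.nabla P.xi (e i)) (e j))
      * (P.g (P.A (e i)) (e j) + P.g (P.A (e j)) (e i))) = 0 := by
    apply QPSCtx.half_cancel'
    nth_rewrite 2 [Finset.sum_comm]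
    rw [← Finset.sum_add_distrib]
    apply Finset.sum_eq_zero
    intro i _
    rw [← Finset.sum_add_distrib]
    apply Finset.sum_eq_zero
    intro j _
    have hw := antis i j
    linear_combination (ε i * ε j * (P.g (P.A (e i)) (e j) + P.g (P.A (e j)) (e i))) * hw
  calc ∑ i, ε i * P.g (P.R (e i) P.xi P.xi) (e i)
      = ∑ i, (-(ε i * P.g (P.A (P.A (e i))) (e i))
          - ε i * P.act P.xi (P.g (P.A (e i)) (e i))
          + ε i * (P.g (P.A (e i)) (P.nabla P.xi (e i))
            + P.g (P.A (P.nabla P.xi (e i))) (e i))) := by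
        apply Finset.sum_congr rfl
        intro i _
        rw [gR i]; ring
    _ = (∑ i, -(ε i * P.g (P.A (P.A (e i))) (e i)))
        - (∑ i, ε i * P.act P.xi (P.g (P.A (e i)) (e i)))
        + ∑ i, ε i * (P.g (P.A (e i)) (P.nabla P.xi (e i))
            + P.g (P.A (P.nabla P.xi (e i))) (e i)) := by
        rw [Finset.sum_add_distrib, Finset.sum_sub_distrib]
    _ = -∑ i, ε i * P.g (P.A (P.A (e i))) (e i) := by
        rw [S1, S2', S2, Finset.sum_neg_distrib]
        ring
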